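/- Let σ, s ≥ 0 and let g be in the Sobolev space H^σ(T^ν, H^s_0(T^d, R^d)) of functions with zero space-average, with Fourier coefficients ĝ(ℓ,j) for ℓ ∈ Z^ν, j ∈ Z^d\{0}. Define u by û(ℓ,j) = ĝ(ℓ,j)/(i ω·ℓ + |j|²). Then u ∈ H^σ(T^ν, H^{s+2}_0) with ‖u‖_{σ,s+2} ≤ ‖g‖_{σ,s}, and u is the unique zero-space-average solution of (ω·∂_φ − Δ) u = g. -/

import Mathlib

noncomputable section

/-- Euclidean norm of a lattice vector. -/
def latNorm {d : ℕ} (ξ : Fin d → ℤ) : ℝ := Real.sqrt (∑ i, ((ξ i : ℝ)) ^ 2)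

/-- Japanese bracket `⟨ξ⟩ = max (1, |ξ|)`. -/
def jb {d : ℕ} (ξ : Fin d → ℤ) : ℝ := max 1 (latNorm ξ)

/-- Euclidean norm of a vector of Fourier coefficients in `ℂ^d`. -/
def cnorm {n : ℕ} (a : Fin n → ℂ) : ℝ := Real.sqrt (∑ j, ‖a j‖ ^ 2)

/-- The mixed Sobolev norm `‖u‖_{σ,s}` of a function on `𝕋^ν × 𝕋^d`, via its Fourier
coefficients `û(ℓ,j)`: `‖u‖²_{σ,s} = Σ_{ℓ,j} ⟨ℓ⟩^{2σ} ⟨j⟩^{2s} |û(ℓ,j)|²`. -/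
def sobNorm2 {ν d n : ℕ} (σ s : ℝ) (u : (Fin ν → ℤ) × (Fin d → ℤ) → Fin n → ℂ) : ℝ :=
  Real.sqrt (∑' p : (Fin ν → ℤ) × (Fin d → ℤ),
    jb p.1 ^ (2 * σ) * jb p.2 ^ (2 * s) * cnorm (u p) ^ 2)

/-- The eigenvalue `i ω·ℓ + |j|²` of `L_ω = ω·∂_φ − Δ` on the Fourier mode `(ℓ, j)`. -/
def eigLω {ν d : ℕ} (ω : Fin ν → ℝ) (p : (Fin ν → ℤ) × (Fin d → ℤ)) : ℂ :=
  Complex.I * ((∑ i, ω i * (p.1 i : ℝ) : ℝ) : ℂ) + ((latNorm p.2 ^ 2 : ℝ) : ℂ)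

lemma latNorm_nonneg {d : ℕ} (ξ : Fin d → ℤ) : 0 ≤ latNorm ξ := Real.sqrt_nonneg _

lemma one_le_latNorm {d : ℕ} {ξ : Fin d → ℤ} (h : ξ ≠ 0) : 1 ≤ latNorm ξ := by
  obtain ⟨i, hi⟩ := Function.ne_iff.mp h
  have h1 : (1:ℝ) ≤ ((ξ i : ℝ)) ^ 2 := by
    have h0 : (1:ℝ) ≤ |(ξ i : ℝ)| := by exact_mod_cast Int.one_le_abs hi
    nlinarith [sq_abs ((ξ i : ℝ))]
  have h2 : (1:ℝ) ≤ ∑ j, ((ξ j : ℝ)) ^ 2 :=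
    le_trans h1 (Finset.single_le_sum (f := fun j => ((ξ j : ℝ))^2)
      (fun j _ => sq_nonneg _) (Finset.mem_univ i))
  calc (1:ℝ) = Real.sqrt 1 := (Real.sqrt_one).symm
    _ ≤ latNorm ξ := Real.sqrt_le_sqrt h2

lemma jb_eq_latNorm {d : ℕ} {ξ : Fin d → ℤ} (h : ξ ≠ 0) : jb ξ = latNorm ξ :=
  max_eq_right (one_le_latNorm h)

lemma one_le_jb {d : ℕ} (ξ : Fin d → ℤ) : 1 ≤ jb ξ := le_max_left _ _
lemma jb_pos {d : ℕ} (ξ : Fin d → ℤ) : 0 < jb ξ := lt_of_lt_of_le one_pos (one_le_jb ξ)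

lemma cnorm_nonneg {n : ℕ} (a : Fin n → ℂ) : 0 ≤ cnorm a := Real.sqrt_nonneg _
lemma cnorm_zero {n : ℕ} : cnorm (0 : Fin n → ℂ) = 0 := by simp [cnorm]
lemma cnorm_smul {n : ℕ} (c : ℂ) (a : Fin n → ℂ) :
    cnorm (c • a) = ‖c‖ * cnorm a := by
  simp only [cnorm, Pi.smul_apply, smul_eq_mul, norm_mul, mul_pow, ← Finset.mul_sum]
  rw [Real.sqrt_mul (by positivity), Real.sqrt_sq (by positivity)]

lemma eig_re {ν d : ℕ} (ω : Fin ν → ℝ) (p : (Fin ν → ℤ) × (Fin d → ℤ)) :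
    (eigLω ω p).re = latNorm p.2 ^ 2 := by simp [eigLω, ← Complex.ofReal_pow]

lemma eig_ne_zero {ν d : ℕ} (ω : Fin ν → ℝ) {p : (Fin ν → ℤ) × (Fin d → ℤ)}
    (h : p.2 ≠ 0) : eigLω ω p ≠ 0 := by
  intro h0
  have := eig_re ω p
  rw [h0] at this
  simp only [Complex.zero_re] at this
  have h1 := one_le_latNorm h
  nlinarith

lemma sq_latNorm_sq_le_abs_eig_sq {ν d : ℕ} (ω : Fin ν → ℝ)
    (p : (Fin ν → ℤ) × (Fin d → ℤ)) :
    (latNorm p.2 ^ 2) ^ 2 ≤ ‖eigLω ω p‖ ^ 2 := by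
  rw [Complex.sq_norm, Complex.normSq_apply, eig_re]
  have : (eigLω ω p).im = ∑ i, ω i * (p.1 i : ℝ) := by
    simp [eigLω, ← Complex.ofReal_pow]
  nlinarith [sq_nonneg (eigLω ω p).im]

/-- let `σ, s ≥ 0` and let `g` have zero space-average (`ĝ(ℓ,0) = 0`) and
finite `‖·‖_{σ,s}` norm. Define `u` by `û(ℓ,j) = ĝ(ℓ,j)/(i ω·ℓ + |j|²)` for `j ≠ 0`,
`û(ℓ,0) = 0`. Then `u` has zero space-average, `‖u‖_{σ,s+2} ≤ ‖g‖_{σ,s}`, it solves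
`(ω·∂_φ − Δ) u = g` (i.e. mode-wise `(i ω·ℓ + |j|²) û(ℓ,j) = ĝ(ℓ,j)`), and it is the
unique zero-space-average solution. -/
theorem stmt_5 {ν d : ℕ} (σ s : ℝ) (hσ : 0 ≤ σ) (hs : 0 ≤ s) (ω : Fin ν → ℝ)
    (g : (Fin ν → ℤ) × (Fin d → ℤ) → Fin d → ℂ)
    (hg0 : ∀ ℓ : Fin ν → ℤ, g (ℓ, 0) = 0)
    (hgsum : Summable fun p : (Fin ν → ℤ) × (Fin d → ℤ) =>
      jb p.1 ^ (2 * σ) * jb p.2 ^ (2 * s) * cnorm (g p) ^ 2)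
    (u : (Fin ν → ℤ) × (Fin d → ℤ) → Fin d → ℂ)
    (hu : ∀ p : (Fin ν → ℤ) × (Fin d → ℤ),
      u p = if p.2 = 0 then 0 else (eigLω ω p)⁻¹ • g p) :
    (∀ ℓ : Fin ν → ℤ, u (ℓ, 0) = 0) ∧
    sobNorm2 σ (s + 2) u ≤ sobNorm2 σ s g ∧
    (∀ p : (Fin ν → ℤ) × (Fin d → ℤ), eigLω ω p • u p = g p) ∧
    (∀ v : (Fin ν → ℤ) × (Fin d → ℤ) → Fin d → ℂ,
      (∀ ℓ : Fin ν → ℤ, v (ℓ, 0) = 0) →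
      (∀ p : (Fin ν → ℤ) × (Fin d → ℤ), eigLω ω p • v p = g p) → v = u) := by
  have hzero : ∀ ℓ : Fin ν → ℤ, u (ℓ, 0) = 0 := fun ℓ => by
    rw [hu (ℓ, 0)]; simp
  have hsolve : ∀ p : (Fin ν → ℤ) × (Fin d → ℤ), eigLω ω p • u p = g p := by
    rintro ⟨ℓ, j⟩
    by_cases hj : j = 0
    · subst hj
      rw [hzero ℓ, hg0 ℓ, smul_zero]
    · rw [hu (ℓ, j), if_neg hj, smul_inv_smul₀ (eig_ne_zero ω hj)]
  have key : ∀ p : (Fin ν → ℤ) × (Fin d → ℤ),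
      jb p.1 ^ (2 * σ) * jb p.2 ^ (2 * (s + 2)) * cnorm (u p) ^ 2 ≤
      jb p.1 ^ (2 * σ) * jb p.2 ^ (2 * s) * cnorm (g p) ^ 2 := by
    intro p
    have hA : 0 ≤ jb p.1 ^ (2 * σ) := Real.rpow_nonneg (jb_pos _).le _
    have hbs : 0 ≤ jb p.2 ^ (2 * s) := Real.rpow_nonneg (jb_pos _).le _
    have hC : 0 ≤ cnorm (g p) := cnorm_nonneg _
    by_cases hp : p.2 = 0
    · rw [hu p, if_pos hp, cnorm_zero]
      have : (0:ℝ) ≤ jb p.1 ^ (2 * σ) * jb p.2 ^ (2 * s) * cnorm (g p) ^ 2 :=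
        mul_nonneg (mul_nonneg hA hbs) (sq_nonneg _)
      simpa using this
    · rw [hu p, if_neg hp, cnorm_smul, norm_inv]
      have hb1 : 1 ≤ jb p.2 := one_le_jb _
      have hbpos : (0:ℝ) < jb p.2 := jb_pos _
      have hE2 : jb p.2 ^ (4:ℕ) ≤ ‖eigLω ω p‖ ^ 2 := by
        have h := sq_latNorm_sq_le_abs_eig_sq ω p
        rw [jb_eq_latNorm hp]
        calc latNorm p.2 ^ (4:ℕ) = (latNorm p.2 ^ 2) ^ 2 := by ring
          _ ≤ _ := h
      have hEpos : 0 < ‖eigLω ω p‖ :=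
        norm_pos_iff.mpr (eig_ne_zero ω hp)
      have hsplit : jb p.2 ^ (2 * (s + 2)) = jb p.2 ^ (2 * s) * jb p.2 ^ (4:ℕ) := by
        rw [← Real.rpow_natCast (jb p.2) 4, ← Real.rpow_add hbpos]
        norm_num
        ring_nf
      have hfrac : jb p.2 ^ (4:ℕ) * ((‖eigLω ω p‖)⁻¹) ^ 2 ≤ 1 := by
        rw [inv_pow, ← div_eq_mul_inv, div_le_one (by positivity)]
        exact hE2
      calc jb p.1 ^ (2 * σ) * jb p.2 ^ (2 * (s + 2)) *
            ((‖eigLω ω p‖)⁻¹ * cnorm (g p)) ^ 2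
          = (jb p.1 ^ (2 * σ) * jb p.2 ^ (2 * s) * cnorm (g p) ^ 2) *
            (jb p.2 ^ (4:ℕ) * ((‖eigLω ω p‖)⁻¹) ^ 2) := by
            rw [hsplit]; ring
        _ ≤ (jb p.1 ^ (2 * σ) * jb p.2 ^ (2 * s) * cnorm (g p) ^ 2) * 1 :=
            mul_le_mul_of_nonneg_left hfrac
              (mul_nonneg (mul_nonneg hA hbs) (sq_nonneg _))
        _ = _ := mul_one _
  have hsumu : Summable fun p : (Fin ν → ℤ) × (Fin d → ℤ) =>
      jb p.1 ^ (2 * σ) * jb p.2 ^ (2 * (s + 2)) * cnorm (u p) ^ 2 := by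
    refine Summable.of_nonneg_of_le (fun p => ?_) key hgsum
    exact mul_nonneg (mul_nonneg (Real.rpow_nonneg (jb_pos _).le _)
      (Real.rpow_nonneg (jb_pos _).le _)) (sq_nonneg _)
  refine ⟨hzero, ?_, hsolve, ?_⟩
  · exact Real.sqrt_le_sqrt (Summable.tsum_le_tsum key hsumu hgsum)
  · intro v hv0 hveq
    funext p
    rcases p with ⟨ℓ, j⟩
    by_cases hj : j = 0
    · subst hj
      rw [hv0 ℓ, hzero ℓ]
    · exact smul_right_injective (Fin d → ℂ) (eig_ne_zero ω (p := (ℓ, j)) hj)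
        ((hveq (ℓ, j)).trans (hsolve (ℓ, j)).symm)
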